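/- Let α ∈ (0,1) and z > 0 satisfy Φ̄(z) = α/2, and define g(ω) = z/√ω + (2/α)·( φ(z/√ω) − (z/√ω)·Φ̄(z/√ω) ) for ω > 0. Then g is twice differentiable at ω = 1 with g''(1) = z²·φ(z)/(2α) > 0. -/

import Mathlib

open MeasureTheory ProbabilityTheory Set

/-- The standard normal density `φ(t) = (2π)^{-1/2} exp(-t²/2)`. -/
noncomputable def phi (t : ℝ) : ℝ := (Real.sqrt (2 * Real.pi))⁻¹ * Real.exp (-t ^ 2 / 2)

/-- The standard normal cumulative distribution function `Φ`. -/
noncomputable def Phi (t : ℝ) : ℝ := ((gaussianReal 0 1) (Iic t)).toReal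

/-- The expected-interval-score factor `g(ω) = z/√ω + (2/α)(φ(z/√ω) − (z/√ω) Φ̄(z/√ω))`. -/
noncomputable def g (z α ω : ℝ) : ℝ :=
  z / Real.sqrt ω
    + (2 / α) * (phi (z / Real.sqrt ω) - (z / Real.sqrt ω) * (1 - Phi (z / Real.sqrt ω)))

lemma phi_eq_gaussian : phi = gaussianPDFReal 0 1 := by
  funext x
  simp [phi, gaussianPDFReal]

lemma integrable_phi : Integrable phi := by
  rw [phi_eq_gaussian]; exact integrable_gaussianPDFReal 0 1

lemma continuous_phi : Continuous phi := by
  unfold phi; fun_prop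

lemma phi_pos (t : ℝ) : 0 < phi t := by
  unfold phi
  positivity

lemma Phi_eq (t : ℝ) : Phi t = ∫ x in Iic t, phi x := by
  unfold Phi
  rw [gaussianReal_apply_eq_integral 0 one_ne_zero,
    ENNReal.toReal_ofReal (integral_nonneg fun x => gaussianPDFReal_nonneg 0 1 x)]
  rw [phi_eq_gaussian]

lemma hasDerivAt_Phi (t : ℝ) : HasDerivAt Phi (phi t) t := by
  have heq : Phi = fun s => Phi 0 + ∫ x in (0:ℝ)..s, phi x := by
    funext s
    rw [Phi_eq, Phi_eq, ← intervalIntegral.integral_Iic_sub_Iic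
      integrable_phi.integrableOn integrable_phi.integrableOn]
    ring
  rw [heq]
  exact (intervalIntegral.integral_hasDerivAt_right
    integrable_phi.intervalIntegrable
    continuous_phi.aestronglyMeasurable.stronglyMeasurableAtFilter
    continuous_phi.continuousAt).const_add _

lemma hasDerivAt_phi (t : ℝ) : HasDerivAt phi (-t * phi t) t := by
  have h1 : HasDerivAt (fun t : ℝ => -t ^ 2 / 2) (-t) t := by
    have := ((hasDerivAt_pow 2 t).neg).div_const 2
    refine this.congr_deriv ?_
    ring
  have := (h1.exp).const_mul (Real.sqrt (2 * Real.pi))⁻¹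
  refine this.congr_deriv ?_
  unfold phi
  ring

/-- If `Φ̄(z) = α/2`, then `g` is twice differentiable at `ω = 1` with
`g''(1) = z² φ(z)/(2α) > 0`. -/
theorem stmt14 (α z : ℝ) (hα : α ∈ Ioo (0 : ℝ) 1) (hz : 0 < z)
    (hzα : 1 - Phi z = α / 2) :
    DifferentiableAt ℝ (g z α) 1
      ∧ HasDerivAt (deriv (g z α)) (z ^ 2 * phi z / (2 * α)) 1
      ∧ 0 < z ^ 2 * phi z / (2 * α) := by
  obtain ⟨hα0, hα1⟩ := hα
  set u : ℝ → ℝ := fun ω => z / Real.sqrt ω with hu_def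
  set h : ℝ → ℝ := fun ω =>
    (1 - (2 / α) * (1 - Phi (z / Real.sqrt ω))) * (-z / (2 * Real.sqrt ω ^ 3)) with hh_def
  -- derivative of u at ω > 0
  have hu : ∀ ω : ℝ, 0 < ω → HasDerivAt u (-z / (2 * Real.sqrt ω ^ 3)) ω := by
    intro ω hω
    have hs : Real.sqrt ω ≠ 0 := (Real.sqrt_pos.mpr hω).ne'
    have := ((Real.hasDerivAt_sqrt hω.ne').inv hs).const_mul z
    have heq : (fun ω => z * (Real.sqrt ω)⁻¹) = u := by
      funext x; simp [hu_def, div_eq_mul_inv]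
    rw [← heq]
    refine this.congr_deriv ?_
    field_simp
  -- g has derivative h on Ioi 0
  have hg : ∀ ω : ℝ, 0 < ω → HasDerivAt (g z α) (h ω) ω := by
    intro ω hω
    have hF : HasDerivAt (fun y => y + (2 / α) * (phi y - y * (1 - Phi y)))
        (1 - (2 / α) * (1 - Phi (u ω))) (u ω) := by
      have := (hasDerivAt_id (u ω)).add
        (((hasDerivAt_phi (u ω)).sub ((hasDerivAt_id (u ω)).mul
          ((hasDerivAt_const (u ω) (1:ℝ)).sub (hasDerivAt_Phi (u ω))))).const_mul (2 / α))
      refine this.congr_deriv ?_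
      simp only [id_eq, Pi.sub_apply]
      ring
    have := hF.comp ω (hu ω hω)
    exact this
  -- deriv g equals h near 1
  have hev : deriv (g z α) =ᶠ[nhds 1] h := by
    filter_upwards [Ioi_mem_nhds (zero_lt_one)] with ω hω
    exact (hg ω hω).deriv
  -- derivative of h at 1
  have hs1 : Real.sqrt (1:ℝ) = 1 := Real.sqrt_one
  have hu1 : HasDerivAt u (-z / 2) 1 := by
    have := hu 1 zero_lt_one
    simpa [hs1] using this
  have hA : HasDerivAt (fun ω => 1 - (2 / α) * (1 - Phi (z / Real.sqrt ω)))
      (-(z * phi z / α)) 1 := by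
    have hPhi : HasDerivAt (fun ω => Phi (z / Real.sqrt ω)) (phi z * (-z / 2)) 1 := by
      have := (hasDerivAt_Phi (u 1)).comp 1 hu1
      exact this.congr_deriv (by simp [hu_def, hs1])
    have := (((hasDerivAt_const 1 (1:ℝ)).sub hPhi).const_mul (2 / α)).const_sub 1
    refine this.congr_deriv ?_
    ring
  have hB : HasDerivAt (fun ω : ℝ => -z / (2 * Real.sqrt ω ^ 3)) (3 * z / 4) 1 := by
    have hsq : HasDerivAt (fun ω : ℝ => Real.sqrt ω ^ 3)
        (3 * Real.sqrt 1 ^ 2 * (1 / (2 * Real.sqrt 1))) 1 :=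
      (Real.hasDerivAt_sqrt one_ne_zero).pow 3
    have hne : Real.sqrt (1:ℝ) ^ 3 ≠ 0 := by rw [hs1]; norm_num
    have := (hsq.inv hne).const_mul (-z / 2)
    have heq : (fun ω : ℝ => -z / 2 * (Real.sqrt ω ^ 3)⁻¹)
        = fun ω : ℝ => -z / (2 * Real.sqrt ω ^ 3) := by
      funext x; field_simp
    rw [← heq]
    refine this.congr_deriv ?_
    rw [hs1]; ring
  have hh1 : HasDerivAt h (z ^ 2 * phi z / (2 * α)) 1 := by
    have := hA.mul hB
    rw [hh_def]
    refine this.congr_deriv ?_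
    rw [hs1]
    have h0 : 1 - (2 / α) * (1 - Phi (z / 1)) = 0 := by
      rw [div_one, hzα]
      field_simp
      norm_num
    rw [h0]
    field_simp
    ring
  refine ⟨(hg 1 zero_lt_one).differentiableAt, ?_, ?_⟩
  · exact hh1.congr_of_eventuallyEq hev
  · have := phi_pos z
    have h2 : (0:ℝ) < 2 * α := by linarith
    positivity
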